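/- arXiv:1701.03165 — 3 statements merged into one kernel-verified Lean document; each statement's English description precedes it below -/
import Mathlib

section
/- Let C be a countable torsion-free group. Then there exists a finitely generated group Γ and an injective group homomorphism φ : C → Γ such that the image φ(C) is a malnormal subgroup of Γ. -/
/-- A subgroup `H` of a group `G` is *malnormal* if for every `g ∉ H`,
`g⁻¹ H g ∩ H = {1}`. -/
def Malnormal {G : Type*} [Group G] (H : Subgroup G) : Prop :=
  ∀ g : G, g ∉ H → ∀ h : G, h ∈ H → g⁻¹ * h * g ∈ H → h = 1

namespace MalnormalAux

open Monoid Monoid.CoprodI Monoid.CoprodI.Word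


variable {ι : Type*} [DecidableEq ι] {M : ι → Type*} [∀ i, Group (M i)]
  [∀ i, DecidableEq (M i)] {i₀ : ι}

theorem word_prod_injective : Function.Injective (Word.prod : Word M → CoprodI M) :=
  fun _ _ h => (Word.equiv (M := M)).symm.injective h

theorem word_eq_nil_of_conj {x y : M i₀} (hx : x ≠ 1) (w : Word M)
    (hw : w.fstIdx ≠ some i₀)
    (heq : CoprodI.of x * w.prod = w.prod * CoprodI.of y) : w.toList = [] := by
  by_contra hL
  have hhead : ∀ l ∈ w.toList.head?, i₀ ≠ Sigma.fst l := Word.fstIdx_ne_iff.mp hw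
  set W₁ : Word M := Word.cons x w hw hx with hW₁
  have hW₁prod : W₁.prod = CoprodI.of x * w.prod := Word.prod_cons _ _ _ _ _
  have hW₁list : W₁.toList = ⟨i₀, x⟩ :: w.toList := rfl
  by_cases hy : y = 1
  · subst hy
    rw [map_one, mul_one] at heq
    have hww : W₁ = w := word_prod_injective (by rw [hW₁prod, heq])
    have := congrArg (fun t => t.toList.length) hww
    simp [hW₁list] at this
  · rcases List.eq_nil_or_concat w.toList with h | ⟨L', z, hcat⟩
    · exact hL h
    rw [List.concat_eq_append] at hcat
    have hchain := w.chain_ne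
    rw [hcat, List.isChain_append] at hchain
    obtain ⟨hchainL', -, hjunc⟩ := hchain
    have hprodw : w.prod = List.prod (L'.map fun l => CoprodI.of l.snd) * CoprodI.of z.snd := by
      rw [Word.prod, hcat, List.map_append, List.prod_append]; simp
    by_cases hz : z.fst = i₀
    · obtain ⟨j, zval⟩ := z
      have hz' : i₀ = j := hz.symm
      subst hz'
      by_cases hzy : zval * y = 1
      · -- cancellation at the end
        have hne2 : ∀ l ∈ L', Sigma.snd l ≠ 1 :=
          fun l hl => w.ne_one l (hcat ▸ List.mem_append_left _ hl)
        set W₂ : Word M := ⟨L', hne2, hchainL'⟩ with hW₂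
        have hww : W₁ = W₂ := word_prod_injective (by
          show W₁.prod = List.prod (L'.map fun l => CoprodI.of l.snd)
          rw [hW₁prod, heq, hprodw, mul_assoc, ← map_mul, hzy, map_one, mul_one])
        have := congrArg (fun t => t.toList.length) hww
        simp only [hW₁list, hcat] at this
        simp [hW₂] at this
        omega
      · -- merge at the end
        have hne2 : ∀ l ∈ L' ++ [⟨i₀, zval * y⟩], Sigma.snd l ≠ 1 := by
          intro l hl
          rcases List.mem_append.mp hl with hl | hl
          · exact w.ne_one l (hcat ▸ List.mem_append_left _ hl)
          · rcases List.mem_singleton.mp hl with rfl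
            exact hzy
        have hch2 : List.Chain' (fun l l' : (Σ i, M i) => l.fst ≠ l'.fst)
            (L' ++ [⟨i₀, zval * y⟩]) := by
          refine List.isChain_append.mpr ⟨hchainL', List.isChain_singleton _, ?_⟩
          intro a ha b hb
          have hb' : (⟨i₀, zval * y⟩ : Σ i, M i) = b := by simpa using hb
          subst hb'
          exact hjunc a ha ⟨i₀, zval⟩ rfl
        set W₂ : Word M := ⟨L' ++ [⟨i₀, zval * y⟩], hne2, by exact hch2⟩ with hW₂
        have hww : W₁ = W₂ := word_prod_injective (by
          show W₁.prod = List.prod ((L' ++ [(⟨i₀, zval * y⟩ : Σ i, M i)]).map fun l => CoprodI.of l.snd)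
          rw [hW₁prod, heq, hprodw, List.map_append, List.prod_append]
          simp [mul_assoc])
        have := congrArg (fun t => t.toList.length) hww
        simp only [hW₁list, hcat] at this
        simp [hW₂] at this
    · -- z.fst ≠ i₀ : append at the end
      have hLne : w.toList ≠ [] := hL
      have hne2 : ∀ l ∈ w.toList ++ [⟨i₀, y⟩], Sigma.snd l ≠ 1 := by
        intro l hl
        rcases List.mem_append.mp hl with hl | hl
        · exact w.ne_one l hl
        · rcases List.mem_singleton.mp hl with rfl; exact hy
      have hch2 : List.Chain' (fun l l' : (Σ i, M i) => l.fst ≠ l'.fst)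
          (w.toList ++ [⟨i₀, y⟩]) := by
        refine List.isChain_append.mpr ⟨w.chain_ne, List.isChain_singleton _, ?_⟩
        intro a ha b hb
        have hb' : (⟨i₀, y⟩ : Σ i, M i) = b := by simpa using hb
        subst hb'
        have ha2 : a ∈ (L' ++ [z]).getLast? := hcat ▸ ha
        rw [List.getLast?_append] at ha2
        have ha' : z = a := by simpa using ha2
        subst ha'
        exact fun h => hz h
      set W₂ : Word M := ⟨w.toList ++ [⟨i₀, y⟩], hne2, by exact hch2⟩ with hW₂
      have hww : W₁ = W₂ := word_prod_injective (by
        show W₁.prod = List.prod ((w.toList ++ [(⟨i₀, y⟩ : Σ i, M i)]).map fun l => CoprodI.of l.snd)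
        rw [hW₁prod, heq, List.map_append, List.prod_append]
        simp [Word.prod])
      have hlist : (⟨i₀, x⟩ :: w.toList : List (Σ i, M i)) = w.toList ++ [⟨i₀, y⟩] := by
        rw [← hW₁list, hww]
      have : w.toList.head? = some ⟨i₀, x⟩ := by
        rw [← List.head?_append_of_ne_nil w.toList (l₂ := [⟨i₀, y⟩]) hLne, ← hlist]
        rfl
      exact hhead _ this rfl

theorem factor_malnormal {g : CoprodI M} {x y : M i₀} (hx : x ≠ 1)
    (heq : CoprodI.of x * g = g * CoprodI.of y) :
    g ∈ (CoprodI.of : M i₀ →* CoprodI M).range := by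
  set w : Word M := Word.equiv g with hw
  have hprod : w.prod = g := (Word.equiv (M := M)).left_inv g
  set p : Word.Pair M i₀ := Word.equivPair i₀ w with hp
  have hrcons : Word.rcons p = w := (Word.equivPair i₀).symm_apply_apply w
  have hdecomp : g = CoprodI.of p.head * p.tail.prod := by
    rw [← hprod, ← hrcons, Word.prod_rcons]
  have htail : CoprodI.of (p.head⁻¹ * x * p.head) * p.tail.prod
      = p.tail.prod * CoprodI.of y := by
    have h2 := heq
    rw [hdecomp] at h2
    calc CoprodI.of (p.head⁻¹ * x * p.head) * p.tail.prod
        = (CoprodI.of p.head)⁻¹ * (CoprodI.of x * (CoprodI.of p.head * p.tail.prod)) := by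
          simp [map_mul, mul_assoc]
      _ = (CoprodI.of p.head)⁻¹ * (CoprodI.of p.head * (p.tail.prod * CoprodI.of y)) := by
          rw [h2, mul_assoc]
      _ = p.tail.prod * CoprodI.of y := by simp [mul_assoc]
  have hx' : p.head⁻¹ * x * p.head ≠ 1 := by
    intro h
    apply hx
    have := congrArg (fun t => p.head * t * p.head⁻¹) h
    simpa [mul_assoc] using this
  have hnil := word_eq_nil_of_conj hx' p.tail p.fstIdx_ne htail
  have htriv : p.tail.prod = 1 := by
    rw [Word.prod, hnil]; simp
  exact ⟨p.head, by rw [hdecomp, htriv, mul_one]⟩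


open HNNExtension HNNExtension.NormalWord


variable {G : Type*} [Group G] {A B : Subgroup G} {φ : A ≃* B}

/-- The chain relation of `HNNExtension.ReducedWord`. -/
abbrev RR (A B : Subgroup G) : ℤˣ × G → ℤˣ × G → Prop :=
  fun a b => a.2 ∈ toSubgroup A B a.1 → a.1 = b.1

lemma int_units_eq_or (u v : ℤˣ) : u = v ∨ u = -v := by
  rcases Int.units_eq_one_or u with rfl | rfl <;>
    rcases Int.units_eq_one_or v with rfl | rfl <;> decide

lemma int_units_neg_ne (u : ℤˣ) : -u ≠ u := by
  rcases Int.units_eq_one_or u with rfl | rfl <;> decide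

/-- Conjugating a word by `t^u * g`. -/
def wrap (p : ℤˣ × G) (q : G × List (ℤˣ × G)) : G × List (ℤˣ × G) :=
  (p.2⁻¹, (-p.1, q.1) :: (q.2 ++ [p]))

variable (φ) in
/-- Product of a head-list pair in the HNN extension. -/
def pr (q : G × List (ℤˣ × G)) : HNNExtension G A B φ :=
  HNNExtension.of q.1 *
    (q.2.map fun x => (HNNExtension.t : HNNExtension G A B φ) ^ (x.1 : ℤ) *
      HNNExtension.of x.2).prod

variable (φ) in
def tprod (L : List (ℤˣ × G)) : HNNExtension G A B φ :=
  (L.map fun x => (HNNExtension.t : HNNExtension G A B φ) ^ (x.1 : ℤ) *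
      HNNExtension.of x.2).prod

lemma tprod_cons (p : ℤˣ × G) (L : List (ℤˣ × G)) :
    tprod φ (p :: L) = (HNNExtension.t : HNNExtension G A B φ) ^ (p.1 : ℤ) *
      HNNExtension.of p.2 * tprod φ L := by
  simp [tprod]

lemma pr_wrap (p : ℤˣ × G) (q : G × List (ℤˣ × G)) :
    pr φ (wrap p q) = (tprod φ [p])⁻¹ * pr φ q * tprod φ [p] := by
  simp only [pr, wrap, tprod, List.map_cons, List.prod_cons, List.map_append, List.prod_append,
    List.map_singleton, List.prod_singleton, map_inv]
  have : ((-p.1 : ℤˣ) : ℤ) = -(p.1 : ℤ) := by simp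
  rw [this, zpow_neg]
  simp [mul_assoc]

lemma pr_foldl (L : List (ℤˣ × G)) :
    ∀ q : G × List (ℤˣ × G),
      pr φ (L.foldl (fun q p => wrap p q) q) = (tprod φ L)⁻¹ * pr φ q * tprod φ L := by
  induction L with
  | nil => intro q; simp [tprod]
  | cons p L' ih =>
    intro q
    rw [List.foldl_cons, ih, pr_wrap, tprod_cons]
    simp only [tprod, List.map_singleton, List.prod_singleton, mul_inv_rev]
    simp [mul_assoc]

/-- Invariant maintained while folding `wrap`. -/
def INV (A B : Subgroup G) (p : ℤˣ × G) (q : G × List (ℤˣ × G)) : Prop :=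
  q.1 = p.2⁻¹ ∧ (∃ b M', q.2 = (-p.1, b) :: (M' ++ [p])) ∧ q.2.Chain' (RR A B)

lemma INV_base (p : ℤˣ × G) (c : G) (hc : c ∉ toSubgroup A B (-p.1)) :
    INV A B p (wrap p (c, [])) := by
  refine ⟨rfl, ⟨c, [], rfl⟩, ?_⟩
  show List.Chain' (RR A B) [(-p.1, c), p]
  refine List.isChain_pair.mpr ?_
  exact fun h => absurd h hc

lemma INV_wrap (p p' : ℤˣ × G) (q : G × List (ℤˣ × G)) (hR : RR A B p p')
    (hq : INV A B p q) : INV A B p' (wrap p' q) := by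
  obtain ⟨hfst, ⟨b, M', hshape⟩, hchain⟩ := hq
  refine ⟨rfl, ⟨q.1, q.2, rfl⟩, ?_⟩
  show List.Chain' (RR A B) ((-p'.1, q.1) :: (q.2 ++ [p']))
  rw [← List.cons_append]; refine List.isChain_append.mpr ?_
  refine ⟨?_, List.isChain_singleton _, ?_⟩
  · rw [List.isChain_cons]
    refine ⟨?_, hchain⟩
    intro y hy
    rw [hshape] at hy
    simp only [List.head?_cons, Option.mem_some_iff] at hy
    subst hy
    intro hmem
    show -p'.1 = -p.1
    have hp2 : p.2 ∈ toSubgroup A B (-p'.1) := by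
      rw [hfst] at hmem
      exact (inv_mem_iff (x := p.2)).mp hmem
    by_contra hne
    have h3 : -p'.1 = p.1 := by
      rcases int_units_eq_or (-p'.1) p.1 with h | h
      · exact h
      · exact absurd h hne
    rw [h3] at hp2
    have h4 := hR hp2
    exact int_units_neg_ne p'.1 (by rw [h3, h4])
  · intro a ha y hy
    obtain rfl : p' = y := by simpa using hy
    have ha2 : a ∈ (((-p'.1, q.1) :: (-p.1, b) :: M') ++ [p]).getLast? := by
      rw [hshape] at ha
      simpa using ha
    rw [List.getLast?_append] at ha2
    obtain rfl : p = a := by simpa using ha2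
    exact hR

lemma INV_foldl : ∀ (L : List (ℤˣ × G)) (p : ℤˣ × G) (q : G × List (ℤˣ × G)),
    List.Chain' (RR A B) (p :: L) → INV A B p q →
    ∃ p', INV A B p' (L.foldl (fun q p => wrap p q) q) := by
  intro L
  induction L with
  | nil => exact fun p q _ hq => ⟨p, hq⟩
  | cons p' L' ih =>
    intro p q hchain hq
    replace hchain := List.isChain_cons_cons.mp hchain
    exact ih p' (wrap p' q) hchain.2 (INV_wrap p p' q hchain.1 hq)

theorem conj_mem_range {x : G} {g : HNNExtension G A B φ}
    (hconj : g⁻¹ * HNNExtension.of x * g ∈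
      (HNNExtension.of : G →* HNNExtension G A B φ).range) :
    g ∈ (HNNExtension.of : G →* HNNExtension G A B φ).range ∨
      ∃ w : G, w⁻¹ * x * w ∈ A ∨ w⁻¹ * x * w ∈ B := by
  obtain ⟨d⟩ := TransversalPair.nonempty G A B
  set W := (NormalWord.equiv φ d) g with hWdef
  have hWprod : W.prod φ = g := (NormalWord.equiv φ d).left_inv g
  rcases hL : W.toList with _ | ⟨p, L'⟩
  · left
    exact ⟨W.head, by rw [← hWprod]; simp [ReducedWord.prod, hL]⟩
  · set c := W.head⁻¹ * x * W.head with hcdef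
    by_cases hc : c ∈ toSubgroup A B (-p.1)
    · right
      refine ⟨W.head, ?_⟩
      rcases Int.units_eq_one_or p.1 with h1 | h1 <;> rw [h1] at hc
      · right; simpa using hc
      · left; simpa using hc
    · exfalso
      obtain ⟨p', hfst, ⟨b, M', hshape⟩, hchain⟩ :=
        INV_foldl L' p (wrap p (c, [])) (hL ▸ W.chain) (INV_base p c hc)
      set Q := L'.foldl (fun q p => wrap p q) (wrap p (c, [])) with hQdef
      have happ : tprod φ (p :: L') = tprod φ [p] * tprod φ L' := by
        simp [tprod]
      have hQprod : pr φ Q = (tprod φ (p :: L'))⁻¹ * HNNExtension.of c * tprod φ (p :: L') := by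
        rw [hQdef, pr_foldl, pr_wrap, happ]
        simp [pr, tprod, mul_assoc]
      have hgprod : g = HNNExtension.of W.head * tprod φ (p :: L') := by
        rw [← hWprod]
        simp [ReducedWord.prod, hL, tprod]
      have hQconj : pr φ Q = g⁻¹ * HNNExtension.of x * g := by
        rw [hQprod, hgprod, hcdef]
        simp [mul_assoc]
      set RW : HNNExtension.NormalWord.ReducedWord G A B := ⟨Q.1, Q.2, hchain⟩ with hRat
      have hRWprod : HNNExtension.NormalWord.ReducedWord.prod φ RW = pr φ Q := rfl
      have hnil := HNNExtension.ReducedWord.toList_eq_nil_of_mem_of_range φ RW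
        (by rw [hRWprod, hQconj]; exact hconj)
      have : RW.toList = (-p'.1, b) :: (M' ++ [p']) := hshape
      rw [hnil] at this
      simp at this


noncomputable section

abbrev Fb := FreeGroup Bool

def xx : Fb := FreeGroup.of true
def yy : Fb := FreeGroup.of false

/-- The free family `y^{-n} x y^n` in the free group on two generators. -/
def afb (n : ℕ) : Fb := (yy ^ n)⁻¹ * xx * yy ^ n

abbrev Pt : Type := ℤ × ℤ

def τ : Equiv.Perm Pt := Equiv.prodCongr (Equiv.addRight (1 : ℤ)) (Equiv.refl ℤ)

def Xs (n : ℕ) : Set Pt := {q | q.1 = -(n : ℤ) ∧ 0 < q.2}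
def Ys (n : ℕ) : Set Pt := {q | q.1 = -(n : ℤ) ∧ q.2 < 0}

lemma Xs_infinite : (Xs 0).Infinite :=
  Set.infinite_of_injective_forall_mem (f := fun k : ℕ => ((0 : ℤ), (k : ℤ) + 1))
    (fun a b h => by simpa using h)
    (fun k => by constructor <;> simp <;> positivity)

lemma Ys_infinite : (Ys 0).Infinite :=
  Set.infinite_of_injective_forall_mem (f := fun k : ℕ => ((0 : ℤ), -((k : ℤ) + 1)))
    (fun a b h => by simpa using h)
    (fun k => by constructor
                 · simp
                 · simp only [Set.mem_setOf_eq]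
                   omega)

lemma Xs_compl_infinite : ((Xs 0)ᶜ).Infinite :=
  Ys_infinite.mono (fun q hq => by
    simp only [Set.mem_compl_iff, Xs, Set.mem_setOf_eq]
    intro ⟨h1, h2⟩
    exact absurd h2 (by simp only [Ys, Set.mem_setOf_eq] at hq; omega))

lemma Ys_compl_infinite : ((Ys 0)ᶜ).Infinite :=
  Xs_infinite.mono (fun q hq => by
    simp only [Set.mem_compl_iff, Ys, Set.mem_setOf_eq]
    intro ⟨h1, h2⟩
    exact absurd h2 (by simp only [Xs, Set.mem_setOf_eq] at hq; omega))

/-- An equivalence with ℕ for any infinite subset of `Pt`. -/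
def eqN (s : Set Pt) (hs : s.Infinite) : ↥s ≃ ℕ := by
  haveI : Infinite ↥s := Set.infinite_coe_iff.mpr hs
  haveI : Encodable ↥s := Encodable.ofCountable ↥s
  haveI : Denumerable ↥s := Denumerable.ofEncodableOfInfinite ↥s
  exact Denumerable.eqv ↥s

def e₁ : ↥((Ys 0)ᶜ) ≃ ↥(Xs 0) :=
  (eqN _ Ys_compl_infinite).trans (eqN _ Xs_infinite).symm

def e₂ : ↥(Ys 0) ≃ ↥((Xs 0)ᶜ) :=
  (eqN _ Ys_infinite).trans (eqN _ Xs_compl_infinite).symm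

open Classical in
def σ : Equiv.Perm Pt :=
  ((Equiv.Set.sumCompl (Ys 0)).symm).trans
    ((e₂.sumCongr e₁).trans ((Equiv.sumComm _ _).trans (Equiv.Set.sumCompl (Xs 0))))

lemma σ_mem₁ {q : Pt} (h : q ∉ Ys 0) : σ q ∈ Xs 0 := by
  classical
  simp only [σ, Equiv.trans_apply]
  rw [Equiv.Set.sumCompl_symm_apply_of_notMem h]
  simp only [Equiv.sumCongr_apply, Sum.map_inr, Equiv.sumComm_apply, Sum.swap_inr,
    Equiv.Set.sumCompl_apply_inl]
  exact (e₁ ⟨q, h⟩).2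

lemma σ_mem₂ {q : Pt} (h : q ∈ Ys 0) : σ q ∉ Xs 0 := by
  classical
  simp only [σ, Equiv.trans_apply]
  rw [Equiv.Set.sumCompl_symm_apply_of_mem h]
  simp only [Equiv.sumCongr_apply, Sum.map_inl, Equiv.sumComm_apply, Sum.swap_inl,
    Equiv.Set.sumCompl_apply_inr]
  exact (e₂ ⟨q, h⟩).2

lemma σ_inv_mem {q : Pt} (h : q ∉ Xs 0) : σ⁻¹ q ∈ Ys 0 := by
  by_contra h'
  have h2 : σ (σ⁻¹ q) ∈ Xs 0 := σ_mem₁ h'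
  rw [show σ (σ⁻¹ q) = q from σ.apply_symm_apply q] at h2
  exact h h2

lemma τ_pow_apply : ∀ (n : ℕ) (q : Pt), (τ ^ n) q = (q.1 + n, q.2) := by
  intro n
  induction n with
  | zero => intro q; simp
  | succ n ih =>
    intro q
    have h1 : (τ ^ (n + 1)) q = (τ ^ n) (τ q) := by
      rw [pow_succ, Equiv.Perm.mul_apply]
    have h2 : τ q = (q.1 + 1, q.2) := rfl
    rw [h1, h2, ih]
    simp only [Prod.mk.injEq]
    refine ⟨by push_cast; ring, by simp⟩

lemma τ_pow_inv_apply (n : ℕ) (q : Pt) : ((τ ^ n)⁻¹) q = (q.1 - n, q.2) := by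
  have h1 := τ_pow_apply n (q.1 - n, q.2)
  simp only [sub_add_cancel] at h1
  apply Equiv.injective (τ ^ n)
  rw [show (τ ^ n) ((τ ^ n)⁻¹ q) = q from (τ ^ n).apply_symm_apply q, h1]

/-- The conjugated permutations. -/
def ap (n : ℕ) : Equiv.Perm Pt := (τ ^ n)⁻¹ * σ * τ ^ n

lemma ap_injective : Function.Injective (FreeGroup.lift ap) := by
  apply FreeGroup.injective_lift_of_ping_pong ap Xs Ys
  · exact fun n => ⟨(-(n : ℤ), 1), rfl, one_pos⟩
  · intro m n hmn
    show Disjoint (Xs m) (Xs n)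
    rw [Set.disjoint_left]
    rintro q ⟨h1, -⟩ ⟨h2, -⟩
    exact hmn (by omega)
  · intro m n hmn
    show Disjoint (Ys m) (Ys n)
    rw [Set.disjoint_left]
    rintro q ⟨h1, -⟩ ⟨h2, -⟩
    exact hmn (by omega)
  · intro m n
    rw [Set.disjoint_left]
    rintro q ⟨-, h1⟩ ⟨-, h2⟩
    omega
  · intro n q hq
    rcases hq with ⟨r, hr, rfl⟩
    have hr' : (τ ^ n) r ∉ Ys 0 := by
      intro hmem
      apply hr
      rw [τ_pow_apply] at hmem
      obtain ⟨h1, h2⟩ := hmem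
      exact ⟨by omega, h2⟩
    have hσ := σ_mem₁ hr'
    show ((τ ^ n)⁻¹ * σ * τ ^ n) r ∈ Xs n
    rw [Equiv.Perm.mul_apply, Equiv.Perm.mul_apply, τ_pow_inv_apply]
    obtain ⟨h1, h2⟩ := hσ
    exact ⟨by omega, h2⟩
  · intro n q hq
    rcases hq with ⟨r, hr, rfl⟩
    have hr' : (τ ^ n) r ∉ Xs 0 := by
      intro hmem
      apply hr
      rw [τ_pow_apply] at hmem
      obtain ⟨h1, h2⟩ := hmem
      exact ⟨by omega, h2⟩
    have hσ := σ_inv_mem hr'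
    show (ap n)⁻¹ r ∈ Ys n
    have : (ap n)⁻¹ = (τ ^ n)⁻¹ * σ⁻¹ * τ ^ n := by
      simp [ap, mul_assoc]
    rw [this, Equiv.Perm.mul_apply, Equiv.Perm.mul_apply, τ_pow_inv_apply]
    obtain ⟨h1, h2⟩ := hσ
    exact ⟨by omega, h2⟩

def ρperm : Fb →* Equiv.Perm Pt := FreeGroup.lift (fun b => bif b then σ else τ)

lemma ρ_comp : ρperm.comp (FreeGroup.lift afb) = FreeGroup.lift ap := by
  apply FreeGroup.ext_hom
  intro n
  simp only [MonoidHom.comp_apply, FreeGroup.lift_apply_of, afb, ap, map_mul, map_inv, map_pow]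
  simp [ρperm, xx, yy]

lemma afb_injective : Function.Injective (FreeGroup.lift afb) := by
  have h : Function.Injective (ρperm ∘ (FreeGroup.lift afb)) := by
    have : ⇑ρperm ∘ ⇑(FreeGroup.lift afb) = ⇑(FreeGroup.lift ap) := by
      rw [← ρ_comp]; rfl
    rw [this]
    exact ap_injective
  exact Function.Injective.of_comp h

end


noncomputable section Main

open Monoid HNNExtension

variable (C : Type) [Group C]

@[reducible] def Fam : Bool → Type := fun b => bif b then C else Fb

instance famGroup : (b : Bool) → Group (Fam C b) := fun b =>
  Bool.rec (motive := fun b => Group (Fam C b))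
    (inferInstanceAs (Group Fb)) (inferInstanceAs (Group C)) b

abbrev GG := Monoid.CoprodI (Fam C)

def inlC : C →* GG C := Monoid.CoprodI.of (M := Fam C) (i := true)
def inrF : Fb →* GG C := Monoid.CoprodI.of (M := Fam C) (i := false)

def πF : GG C →* Fb :=
  Monoid.CoprodI.lift (fun b =>
    Bool.rec (motive := fun b => Fam C b →* Fb) (MonoidHom.id Fb) 1 b)

lemma πF_inl (c : C) : πF C (inlC C c) = 1 :=
  Monoid.CoprodI.lift_of (M := Fam C)
    (fun b => Bool.rec (motive := fun b => Fam C b →* Fb) (MonoidHom.id Fb) 1 b) (i := true) c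

lemma πF_inr (f : Fb) : πF C (inrF C f) = f :=
  Monoid.CoprodI.lift_of (M := Fam C)
    (fun b => Bool.rec (motive := fun b => Fam C b →* Fb) (MonoidHom.id Fb) 1 b) (i := false) f


lemma inlC_injective : Function.Injective ⇑(inlC C) :=
  Monoid.CoprodI.of_injective (M := Fam C) true

variable (e : ℕ → C)

def θA : FreeGroup ℕ →* GG C := (inrF C).comp (FreeGroup.lift afb)
def θB : FreeGroup ℕ →* GG C := FreeGroup.lift (fun n => inlC C (e n) * inrF C (afb n))

lemma θA_of (n : ℕ) : θA C (FreeGroup.of n) = inrF C (afb n) := by simp [θA]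
lemma θB_of (n : ℕ) : θB C e (FreeGroup.of n) = inlC C (e n) * inrF C (afb n) := by simp [θB]

lemma πθA (m : FreeGroup ℕ) : πF C (θA C m) = FreeGroup.lift afb m := by
  have : (πF C).comp (θA C) = FreeGroup.lift afb := by
    apply FreeGroup.ext_hom
    intro n
    simp [θA, πF_inr]
  exact DFunLike.congr_fun this m

lemma πθB (m : FreeGroup ℕ) : πF C (θB C e m) = FreeGroup.lift afb m := by
  have : (πF C).comp (θB C e) = FreeGroup.lift afb := by
    apply FreeGroup.ext_hom
    intro n
    simp [θB, πF_inr, πF_inl]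
  exact DFunLike.congr_fun this m

lemma θA_inj : Function.Injective (θA C) := by
  have h : Function.Injective (⇑(πF C) ∘ ⇑(θA C)) := by
    have h2 : ⇑(πF C) ∘ ⇑(θA C) = ⇑(FreeGroup.lift afb) := funext (πθA C)
    rw [h2]; exact afb_injective
  exact h.of_comp

lemma θB_inj : Function.Injective (θB C e) := by
  have h : Function.Injective (⇑(πF C) ∘ ⇑(θB C e)) := by
    have h2 : ⇑(πF C) ∘ ⇑(θB C e) = ⇑(FreeGroup.lift afb) := funext (πθB C e)
    rw [h2]; exact afb_injective
  exact h.of_comp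

def Asub : Subgroup (GG C) := (θA C).range
def Bsub : Subgroup (GG C) := (θB C e).range

def φiso : Asub C ≃* Bsub C e :=
  (MonoidHom.ofInjective (θA_inj C)).symm.trans (MonoidHom.ofInjective (θB_inj C e))

abbrev Γgp := HNNExtension (GG C) (Asub C) (Bsub C e) (φiso C e)

lemma key_conj (m : FreeGroup ℕ) :
    (HNNExtension.of (θB C e m) : Γgp C e)
      = HNNExtension.t * HNNExtension.of (θA C m) * HNNExtension.t⁻¹ := by
  have hmem : θA C m ∈ Asub C := ⟨m, rfl⟩
  have h0 : (MonoidHom.ofInjective (θA_inj C)) m = ⟨θA C m, hmem⟩ :=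
    Subtype.ext (MonoidHom.ofInjective_apply _)
  have h1 : ((φiso C e) ⟨θA C m, hmem⟩ : GG C) = θB C e m := by
    have h3 : (φiso C e) ⟨θA C m, hmem⟩ = MonoidHom.ofInjective (θB_inj C e) m := by
      show ((MonoidHom.ofInjective (θA_inj C)).symm.trans
        (MonoidHom.ofInjective (θB_inj C e))) ⟨θA C m, hmem⟩ = _
      rw [← h0, MulEquiv.trans_apply, MulEquiv.symm_apply_apply]
    rw [h3]
    exact MonoidHom.ofInjective_apply _
  have h2 := HNNExtension.equiv_eq_conj (φ := φiso C e) (⟨θA C m, hmem⟩ : Asub C)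
  rw [h1] at h2
  exact h2

lemma fg_Γ (he : Function.Surjective e) : Group.FG (Γgp C e) := by
  rw [Group.fg_iff]
  refine ⟨{HNNExtension.of (inrF C xx), HNNExtension.of (inrF C yy), HNNExtension.t}, ?_,
    (Set.finite_singleton _).insert _ |>.insert _⟩
  set S : Set (Γgp C e) :=
    {HNNExtension.of (inrF C xx), HNNExtension.of (inrF C yy), HNNExtension.t} with hS
  rw [eq_top_iff]
  intro γ hγtop
  clear hγtop
  have hF : ∀ f : Fb, HNNExtension.of (inrF C f) ∈ Subgroup.closure S := by
    intro f
    induction f using FreeGroup.induction_on with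
    | C1 => rw [map_one, map_one]; exact one_mem _
    | of b =>
      cases b
      · exact Subgroup.subset_closure (show _ ∈ S by
          rw [show (FreeGroup.of false : Fb) = yy from rfl]
          simp [hS])
      · exact Subgroup.subset_closure (show _ ∈ S by
          rw [show (FreeGroup.of true : Fb) = xx from rfl]
          simp [hS])
    | inv_of b ih => rw [map_inv, map_inv]; exact inv_mem ih
    | mul u v ihu ihv => rw [map_mul, map_mul]; exact mul_mem ihu ihv
  have ht : (HNNExtension.t : Γgp C e) ∈ Subgroup.closure S :=
    Subgroup.subset_closure (by simp [hS])
  have hC : ∀ c : C, HNNExtension.of (inlC C c) ∈ Subgroup.closure S := by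
    intro c
    obtain ⟨n, rfl⟩ := he c
    have h1 : (HNNExtension.of (θB C e (FreeGroup.of n)) : Γgp C e) ∈ Subgroup.closure S := by
      rw [key_conj, θA_of]
      exact mul_mem (mul_mem ht (hF _)) (inv_mem ht)
    rw [θB_of, map_mul] at h1
    have h2 := mul_mem h1 (inv_mem (hF (afb n)))
    simpa [mul_assoc] using h2
  induction γ using HNNExtension.induction_on with
  | of g =>
    induction g using Monoid.CoprodI.induction_on with
    | one => rw [map_one]; exact one_mem _
    | of i m =>
      cases i
      · exact hF m
      · exact hC m
    | mul u v ihu ihv => rw [map_mul]; exact mul_mem ihu ihv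
  | t => exact ht
  | mul u v ihu ihv => exact mul_mem ihu ihv
  | inv u ih => exact inv_mem ih

end Main

end MalnormalAux

/-- Every countable torsion-free group embeds as a malnormal subgroup of some
finitely generated group. -/
theorem exists_fg_malnormal_embedding (C : Type) [Group C] [Countable C]
    (hC : ∀ g : C, g ≠ 1 → ¬IsOfFinOrder g) :
    ∃ (Γ : Type) (_ : Group Γ), Group.FG Γ ∧
      ∃ φ : C →* Γ, Function.Injective φ ∧ Malnormal φ.range := by
  classical
  haveI : Nonempty C := ⟨1⟩
  obtain ⟨e, he⟩ := exists_surjective_nat C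
  letI : ∀ i, DecidableEq (MalnormalAux.Fam C i) := fun i => Classical.decEq _
  refine ⟨MalnormalAux.Γgp C e, inferInstance, MalnormalAux.fg_Γ C e he,
    (HNNExtension.of).comp (MalnormalAux.inlC C), ?_, ?_⟩
  · exact (HNNExtension.of_injective (MalnormalAux.φiso C e)).comp
      (MalnormalAux.inlC_injective C)
  · intro γ hγ h hh hconj
    obtain ⟨c, rfl⟩ := hh
    simp only [MonoidHom.comp_apply] at hγ hconj ⊢
    rcases eq_or_ne c 1 with hc | hc
    · rw [hc, map_one, map_one]
    exfalso
    have hconj' : γ⁻¹ * HNNExtension.of (MalnormalAux.inlC C c) * γ ∈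
        (HNNExtension.of : MalnormalAux.GG C →* MalnormalAux.Γgp C e).range := by
      obtain ⟨c₂, hc₂⟩ := hconj
      exact ⟨MalnormalAux.inlC C c₂, hc₂⟩
    rcases MalnormalAux.conj_mem_range hconj' with hg | ⟨w, hw⟩
    · obtain ⟨g₀, rfl⟩ := hg
      obtain ⟨c₂, hc₂⟩ := hconj
      have hgg : g₀⁻¹ * MalnormalAux.inlC C c * g₀ = MalnormalAux.inlC C c₂ := by
        apply HNNExtension.of_injective (MalnormalAux.φiso C e)
        rw [map_mul, map_mul, map_inv]
        exact hc₂.symm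
      have heq2 : MalnormalAux.inlC C c * g₀ = g₀ * MalnormalAux.inlC C c₂ := by
        have h7 := congrArg (fun z => g₀ * z) hgg
        simpa [mul_assoc] using h7
      have hmem := @MalnormalAux.factor_malnormal Bool instDecidableEqBool
        (MalnormalAux.Fam C) (MalnormalAux.famGroup C) (fun i => Classical.decEq _) true
        g₀ c c₂ hc heq2
      obtain ⟨d, hd⟩ := hmem
      exact hγ ⟨d, congrArg HNNExtension.of hd⟩
    · have hπ : MalnormalAux.πF C (w⁻¹ * MalnormalAux.inlC C c * w) = 1 := by
        rw [map_mul, map_mul, map_inv, MalnormalAux.πF_inl]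
        simp
      have hv1 : w⁻¹ * MalnormalAux.inlC C c * w = 1 := by
        rcases hw with hA | hB
        · obtain ⟨m, hm⟩ := hA
          have h5 : FreeGroup.lift MalnormalAux.afb m = 1 := by
            rw [← MalnormalAux.πθA C m, hm, hπ]
          have hm1 : m = 1 := MalnormalAux.afb_injective (by rw [h5, map_one])
          rw [← hm, hm1, map_one]
        · obtain ⟨m, hm⟩ := hB
          have h5 : FreeGroup.lift MalnormalAux.afb m = 1 := by
            rw [← MalnormalAux.πθB C e m, hm, hπ]
          have hm1 : m = 1 := MalnormalAux.afb_injective (by rw [h5, map_one])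
          rw [← hm, hm1, map_one]
      have hcl : MalnormalAux.inlC C c = 1 := by
        have h6 := congrArg (fun z => w * z * w⁻¹) hv1
        simpa [mul_assoc] using h6
      exact hc (MalnormalAux.inlC_injective C (by rw [hcl, map_one]))
end

section
/- Let G be a group, C a subgroup of G, and (N_i)_{i ∈ ℕ} a monotone increasing sequence of normal subgroups of G with N = ⋃_i N_i. Suppose that C ∩ N = {1} and that for each i the image of C in the quotient G/N_i is a malnormal subgroup of G/N_i. Then the image of C in G/N is a malnormal subgroup of G/N. -/
/-- If `C` is a subgroup of `G`, `(N i)` is a monotone increasing sequence of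
normal subgroups of `G` with union `N`, `C ∩ N = {1}`, and the image of `C` in
each quotient `G ⧸ N i` is malnormal, then the image of `C` in `G ⧸ N` is
malnormal. -/
theorem malnormal_quotient_of_union {G : Type*} [Group G] (C : Subgroup G)
    (N : ℕ → Subgroup G) [∀ i, (N i).Normal] (hmono : Monotone N)
    (Nu : Subgroup G) [Nu.Normal] (hNu : (Nu : Set G) = ⋃ i, (N i : Set G))
    (htriv : C ⊓ Nu = ⊥)
    (hmal : ∀ i, Malnormal (C.map (QuotientGroup.mk' (N i)))) :
    Malnormal (C.map (QuotientGroup.mk' Nu)) := by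
  have hle : ∀ i, N i ≤ Nu := by
    intro i x hx
    have : x ∈ (Nu : Set G) := by rw [hNu]; exact Set.mem_iUnion.2 ⟨i, hx⟩
    exact this
  intro g hg h hh hconj
  obtain ⟨c, hc, rfl⟩ := hh
  obtain ⟨x, rfl⟩ := QuotientGroup.mk'_surjective Nu g
  obtain ⟨c', hc', hcc'⟩ := hconj
  have hcc'' : (QuotientGroup.mk' Nu) c' = (QuotientGroup.mk' Nu) (x⁻¹ * c * x) := by
    rw [hcc']; simp [QuotientGroup.mk'_apply, QuotientGroup.mk_mul]
  have hmem : c'⁻¹ * (x⁻¹ * c * x) ∈ Nu := by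
    rwa [QuotientGroup.mk'_apply, QuotientGroup.mk'_apply, QuotientGroup.eq] at hcc''
  obtain ⟨i, hi⟩ : ∃ i, c'⁻¹ * (x⁻¹ * c * x) ∈ N i := by
    have : c'⁻¹ * (x⁻¹ * c * x) ∈ (Nu : Set G) := hmem
    rw [hNu] at this
    exact Set.mem_iUnion.1 this
  have hx : (QuotientGroup.mk' (N i)) x ∉ C.map (QuotientGroup.mk' (N i)) := by
    rintro ⟨c₀, hc₀, hc₀x⟩
    apply hg
    refine ⟨c₀, hc₀, ?_⟩
    rw [QuotientGroup.mk'_apply, QuotientGroup.mk'_apply, QuotientGroup.eq]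
    have : c₀⁻¹ * x ∈ N i := by
      rwa [QuotientGroup.mk'_apply, QuotientGroup.mk'_apply, QuotientGroup.eq] at hc₀x
    exact hle i this
  have hkey := hmal i ((QuotientGroup.mk' (N i)) x) hx ((QuotientGroup.mk' (N i)) c)
    ⟨c, hc, rfl⟩ ?_
  · -- hkey : mk' (N i) c = 1, so c ∈ N i ⊆ Nu, so c = 1
    have hcN : c ∈ N i := by
      rwa [← QuotientGroup.ker_mk' (N i), MonoidHom.mem_ker]
    have : c ∈ C ⊓ Nu := ⟨hc, hle i hcN⟩
    rw [htriv, Subgroup.mem_bot] at this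
    rw [this, map_one]
  · refine ⟨c', hc', ?_⟩
    have : (QuotientGroup.mk' (N i)) c' = (QuotientGroup.mk' (N i)) (x⁻¹ * c * x) := by
      rw [QuotientGroup.mk'_apply, QuotientGroup.mk'_apply, QuotientGroup.eq]
      exact hi
    rw [this]; simp [QuotientGroup.mk'_apply, QuotientGroup.mk_mul]
end

section
/- Let C be a countable torsion-free group and let x ∈ C be a nontrivial element of the center of C. Then there exists a finitely generated group Γ and an injective group homomorphism φ : C → Γ such that the centralizer of φ(x) in Γ is exactly the image φ(C). -/
/-- A predicate on a monoid saying that only 1 is of finite order. -/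
def Monoid.IsTorsionFree (G : Type*) [Monoid G] : Prop :=
  ∀ g : G, g ≠ 1 → ¬IsOfFinOrder g

open HNNExtension

namespace HNNAux

variable {G : Type} [Group G] {A B : Subgroup G} (φ : A ≃* B)

open HNNExtension.NormalWord (ReducedWord)

/-- multiply the last letter of the list by `x` -/
def tack (x : G) : List (ℤˣ × G) → List (ℤˣ × G)
  | [] => []
  | [a] => [(a.1, a.2 * x)]
  | a :: b :: l => a :: tack x (b :: l)

theorem tack_map_fst (x : G) : ∀ l : List (ℤˣ × G),
    (tack x l).map Prod.fst = l.map Prod.fst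
  | [] => rfl
  | [a] => rfl
  | a :: b :: l => by
      simp only [tack, List.map_cons, List.cons.injEq, true_and]
      simpa using tack_map_fst x (b :: l)

theorem tack_chain {x : G} : ∀ {l : List (ℤˣ × G)},
    l.Chain' (fun a b => a.2 ∈ toSubgroup A B a.1 → a.1 = b.1) →
    (tack x l).Chain' (fun a b => a.2 ∈ toSubgroup A B a.1 → a.1 = b.1)
  | [], _ => List.isChain_nil
  | [a], _ => List.isChain_singleton _
  | a :: b :: l, h => by
      rcases List.isChain_cons_cons.1 h with ⟨hab, h'⟩
      cases l with
      | nil => exact List.isChain_cons_cons.2 ⟨hab, tack_chain h'⟩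
      | cons c l => exact List.isChain_cons_cons.2 ⟨hab, tack_chain h'⟩

theorem tack_prod (x : G) : ∀ (l : List (ℤˣ × G)), l ≠ [] →
    (List.map (fun p : ℤˣ × G => (t ^ (p.1 : ℤ) * of p.2 : HNNExtension G A B φ)) (tack x l)).prod
      = (List.map (fun p : ℤˣ × G => (t ^ (p.1 : ℤ) * of p.2 : HNNExtension G A B φ)) l).prod * of x
  | [], h => absurd rfl h
  | [a], _ => by simp [tack, mul_assoc]
  | a :: b :: l, _ => by
      rw [tack]
      simp only [List.map_cons, List.prod_cons]
      rw [tack_prod x (b :: l) (by simp)]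
      simp [mul_assoc]

/-- the reduced word for `y * of x`, when `y`'s list is nonempty -/
theorem prod_tack (w : ReducedWord G A B) (x : G) (h : w.toList ≠ []) :
    (ReducedWord.prod φ ⟨w.head, tack x w.toList, tack_chain w.chain⟩ : HNNExtension G A B φ)
      = ReducedWord.prod φ w * of x := by
  simp only [ReducedWord.prod]
  rw [tack_prod φ x w.toList h, ← mul_assoc]

theorem exists_reducedWord (y : HNNExtension G A B φ) :
    ∃ w : ReducedWord G A B, ReducedWord.prod φ w = y := by
  rcases HNNExtension.NormalWord.TransversalPair.nonempty G A B with ⟨d⟩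
  refine ⟨((HNNExtension.NormalWord.equiv φ d) y).toReducedWord, ?_⟩
  have h := HNNExtension.NormalWord.prod_smul φ y (HNNExtension.NormalWord.empty (d := d))
  rw [HNNExtension.NormalWord.prod_empty, mul_one] at h
  exact h

end HNNAux

namespace HNNAux

variable {G : Type} [Group G] {A B : Subgroup G} (φ : A ≃* B)

open HNNExtension.NormalWord (ReducedWord)

theorem tack_head?_fst (x : G) (l : List (ℤˣ × G)) :
    Option.map Prod.fst (tack x l).head? = Option.map Prod.fst l.head? := by
  rw [← List.head?_map, ← List.head?_map, tack_map_fst]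

theorem conj_pow_t (u : ℤˣ) (b : toSubgroup A B (-u)) :
    (t ^ (u : ℤ))⁻¹ * of (b : G) * t ^ (u : ℤ)
      = (of (toSubgroupEquiv φ (-u) b : G) : HNNExtension G A B φ) := by
  rcases Int.units_eq_one_or u with rfl | rfl
  · simp only [Units.val_one, zpow_one]; exact (equiv_symm_eq_conj (φ := φ) b).symm
  · have h1 : ((-1 : ℤˣ) : ℤ) = (-1 : ℤ) := rfl
    rw [h1, zpow_neg_one, inv_inv]
    have h2 : -(-1 : ℤˣ) = 1 := by decide
    exact (equiv_eq_conj (φ := φ) _).symm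

/-- L1 : if `x` is not conjugate into `A` or `B` then anything commuting
with `of x` is in the range of `of`. -/
theorem mem_range_of_commute (x : G)
    (hx : ∀ (u : ℤˣ) (g : G), g * x * g⁻¹ ∉ toSubgroup A B u)
    {y : HNNExtension G A B φ} (h : y * of x = of x * y) :
    y ∈ (of : G →* HNNExtension G A B φ).range := by
  obtain ⟨w, hw⟩ := exists_reducedWord φ y
  rcases hl : w.toList with _ | ⟨a, l'⟩
  · refine ⟨w.head, ?_⟩
    rw [← hw, ReducedWord.prod, hl]
    simp
  · exfalso
    have hlne : w.toList ≠ [] := by rw [hl]; simp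
    have hprod : ReducedWord.prod φ ⟨w.head, tack x w.toList, tack_chain w.chain⟩
        = ReducedWord.prod φ ⟨x * w.head, w.toList, w.chain⟩ := by
      rw [prod_tack φ w x hlne, hw]
      rw [h]
      simp only [ReducedWord.prod, map_mul, mul_assoc]
      rw [← hw]; rfl
    have hc := (HNNExtension.ReducedWord.map_fst_eq_and_of_prod_eq φ hprod).2
    have hmem : a.1 ∈ Option.map Prod.fst
        (ReducedWord.toList ⟨w.head, tack x w.toList, tack_chain w.chain⟩).head? := by
      show a.1 ∈ Option.map Prod.fst (tack x w.toList).head?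
      rw [tack_head?_fst, hl]
      simp
    have := hc a.1 hmem
    simp only at this
    refine hx (-a.1) w.head⁻¹ ?_
    rw [inv_inv]
    rw [← mul_assoc] at this
    exact this

/-- L2 : conjugacy transfer (Collins-style), assuming the edge isomorphisms
map conjugates of `x` to conjugates of `x`. -/
theorem conj_transfer (x : G)
    (hφ : ∀ (u : ℤˣ) (a : toSubgroup A B u) (h : G), (a : G) = h * x * h⁻¹ →
      ∃ h', ((toSubgroupEquiv φ u a : G) = h' * x * h'⁻¹)) :
    ∀ (n : ℕ) (w : ReducedWord G A B), w.toList.length = n → ∀ k : G,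
      of k * ReducedWord.prod φ w = ReducedWord.prod φ w * of x →
      ∃ h', k = h' * x * h'⁻¹ := by
  intro n
  induction n with
  | zero =>
    intro w hn k hk
    have hl : w.toList = [] := List.length_eq_zero_iff.1 hn
    rw [ReducedWord.prod, hl] at hk
    simp only [List.map_nil, List.prod_nil, mul_one, ← map_mul] at hk
    have := HNNExtension.of_injective (φ := φ) hk
    exact ⟨w.head, by rw [← this]; group⟩
  | succ n ih =>
    intro w hn k hk
    rcases hl : w.toList with _ | ⟨a, l'⟩
    · rw [hl] at hn; simp at hn
    · have hlne : w.toList ≠ [] := by rw [hl]; simp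
      have hprod : ReducedWord.prod φ ⟨w.head, tack x w.toList, tack_chain w.chain⟩
          = ReducedWord.prod φ ⟨k * w.head, w.toList, w.chain⟩ := by
        rw [prod_tack φ w x hlne, ← hk]
        simp only [ReducedWord.prod, map_mul, mul_assoc]
      have hc := (HNNExtension.ReducedWord.map_fst_eq_and_of_prod_eq φ hprod).2
      have hmem : a.1 ∈ Option.map Prod.fst
          (ReducedWord.toList ⟨w.head, tack x w.toList, tack_chain w.chain⟩).head? := by
        show a.1 ∈ Option.map Prod.fst (tack x w.toList).head?
        rw [tack_head?_fst, hl]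
        simp
      have hb : w.head⁻¹ * (k * w.head) ∈ toSubgroup A B (-a.1) := by
        simpa using hc a.1 hmem
      -- the shorter word
      have hchain' : l'.Chain' (fun a b => a.2 ∈ toSubgroup A B a.1 → a.1 = b.1) := by
        have := w.chain; rw [hl] at this; exact this.tail
      set w' : ReducedWord G A B := ⟨a.2, l', hchain'⟩ with hw'
      have hyw : ReducedWord.prod φ w
          = of w.head * t ^ (a.1 : ℤ) * ReducedWord.prod φ w' := by
        rw [ReducedWord.prod, ReducedWord.prod, hl]
        simp only [List.map_cons, List.prod_cons, hw']
        simp [mul_assoc]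
      have hchainb : w.head⁻¹ * (k * w.head) ∈ toSubgroup A B (-a.1) := hb
      set a0 : toSubgroup A B (-a.1) := ⟨w.head⁻¹ * (k * w.head), hb⟩ with ha0
      set k'' : G := (toSubgroupEquiv φ (-a.1) a0 : G) with hk''def
      have hcpt : (t ^ ((a.1 : ℤ)))⁻¹ * of ((a0 : G)) * t ^ ((a.1 : ℤ))
          = (of k'' : HNNExtension G A B φ) := conj_pow_t φ a.1 a0
      have hofb : (of ((a0 : G)) : HNNExtension G A B φ)
          = (of w.head)⁻¹ * of k * of w.head := by
        show (of (w.head⁻¹ * (k * w.head)) : HNNExtension G A B φ) = _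
        simp [map_mul, mul_assoc]
      have hk2 : of k * (of w.head * t ^ ((a.1 : ℤ)) * ReducedWord.prod φ w')
          = (of w.head * t ^ ((a.1 : ℤ)) * ReducedWord.prod φ w') * of x := by
        rw [← hyw]; exact hk
      have hcon : of k'' * ReducedWord.prod φ w' = ReducedWord.prod φ w' * of x := by
        rw [← hcpt, hofb]
        calc ((t ^ ((a.1 : ℤ)))⁻¹ * ((of w.head)⁻¹ * of k * of w.head) * t ^ ((a.1 : ℤ)))
              * ReducedWord.prod φ w'
            = (t ^ ((a.1 : ℤ)))⁻¹ * (of w.head)⁻¹ *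
              (of k * (of w.head * t ^ ((a.1 : ℤ)) * ReducedWord.prod φ w')) := by group
          _ = (t ^ ((a.1 : ℤ)))⁻¹ * (of w.head)⁻¹ *
              ((of w.head * t ^ ((a.1 : ℤ)) * ReducedWord.prod φ w') * of x) := by rw [hk2]
          _ = ReducedWord.prod φ w' * of x := by group
      have hlen' : w'.toList.length = n := by
        have h5 : w.toList.length = n + 1 := hn
        rw [hl] at h5
        simpa using h5
      obtain ⟨h, hkh⟩ := ih w' hlen' k'' hcon
      obtain ⟨h', hb'⟩ := hφ _ (toSubgroupEquiv φ (-a.1) a0) h hkh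
      rw [toSubgroupEquiv_neg_apply] at hb'
      refine ⟨w.head * h', ?_⟩
      have h6 : (a0 : G) = w.head⁻¹ * (k * w.head) := rfl
      rw [h6] at hb'
      have h7 : k = w.head * (w.head⁻¹ * (k * w.head)) * w.head⁻¹ := by group
      rw [h7, hb']
      group

section Base

open Monoid Monoid.Coprod

variable (C : Type) [Group C] (c : ℕ → C)

/-- the base group `C ∗ F(ℕ)` -/
abbrev G0 := Monoid.Coprod C (FreeGroup ℕ)

def eC : C →* G0 C := inl
def eF : FreeGroup ℕ →* G0 C := inr

def thom : G0 C →* G0 C :=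
  Coprod.lift inl (FreeGroup.lift fun n => inl (c n) * inr (FreeGroup.of n))

def tinv : G0 C →* G0 C :=
  Coprod.lift inl (FreeGroup.lift fun n => (inl (c n))⁻¹ * inr (FreeGroup.of n))

theorem tinv_comp_thom : (tinv C c).comp (thom C c) = MonoidHom.id _ := by
  apply Coprod.hom_ext
  · ext z
    simp [thom, tinv]
  · apply FreeGroup.ext_hom
    intro n
    simp [thom, tinv, mul_assoc]

theorem thom_comp_tinv : (thom C c).comp (tinv C c) = MonoidHom.id _ := by
  apply Coprod.hom_ext
  · ext z
    simp [thom, tinv]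
  · apply FreeGroup.ext_hom
    intro n
    simp [thom, tinv, mul_assoc]

theorem tinv_thom (g : G0 C) : tinv C c (thom C c g) = g := by
  have := congrArg (fun f => (f : G0 C →* G0 C) g) (tinv_comp_thom C c)
  simpa using this

theorem thom_tinv (g : G0 C) : thom C c (tinv C c g) = g := by
  have := congrArg (fun f => (f : G0 C →* G0 C) g) (thom_comp_tinv C c)
  simpa using this

theorem thom_injective : Function.Injective (thom C c) :=
  Function.LeftInverse.injective (tinv_thom C c)

theorem thom_inl (z : C) : thom C c (inl z) = inl z := by simp [thom]
theorem tinv_inl (z : C) : tinv C c (inl z) = inl z := by simp [tinv]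

def shift : G0 C →* G0 C :=
  Coprod.lift inl (FreeGroup.lift fun n => inr (FreeGroup.of (n + 1)))

def unshift : G0 C →* G0 C :=
  Coprod.lift inl (FreeGroup.lift fun n => if n = 0 then 1 else inr (FreeGroup.of (n - 1)))

theorem unshift_comp_shift : (unshift C).comp (shift C) = MonoidHom.id _ := by
  apply Coprod.hom_ext
  · ext z
    simp [shift, unshift]
  · apply FreeGroup.ext_hom
    intro n
    simp [shift, unshift]

theorem shift_injective : Function.Injective (shift C) := by
  have h : ∀ g, unshift C (shift C g) = g := by
    intro g
    have := congrArg (fun f => (f : G0 C →* G0 C) g) (unshift_comp_shift C)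
    simpa using this
  exact Function.LeftInverse.injective h

theorem shift_inl (z : C) : shift C (inl z) = inl z := by simp [shift]

/-- shift of an `inr` element is an `inr` element -/
theorem shift_inr (w : FreeGroup ℕ) :
    shift C (inr w) = inr (FreeGroup.lift (fun n => FreeGroup.of (n + 1)) w) := by
  have : (shift C).comp inr
      = inr.comp (FreeGroup.lift fun n => FreeGroup.of (n + 1)) := by
    apply FreeGroup.ext_hom
    intro n
    simp [shift]
  exact congrArg (fun f => (f : FreeGroup ℕ →* G0 C) w) this

end Base

section RangeEquiv

variable {H K : Type} [Group H] [Group K] (f g : H →* K)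
  (hf : Function.Injective f) (hg : Function.Injective g)

/-- equivalence between ranges of two injective homs with the same domain. -/
noncomputable def rangeEquiv : (f.range : Subgroup K) ≃* (g.range : Subgroup K) :=
  (MonoidHom.ofInjective hf).symm.trans (MonoidHom.ofInjective hg)

theorem rangeEquiv_apply (h : H) (hmem : f h ∈ f.range) :
    ((rangeEquiv f g hf hg ⟨f h, hmem⟩ : g.range) : K) = g h := by
  have h1 : (MonoidHom.ofInjective hf) h = ⟨f h, hmem⟩ :=
    Subtype.ext (by simp [MonoidHom.ofInjective_apply])
  rw [rangeEquiv, MulEquiv.trans_apply, ← h1, MulEquiv.symm_apply_apply,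
    MonoidHom.ofInjective_apply]

theorem rangeEquiv_symm_apply (h : H) (hmem : g h ∈ g.range) :
    (((rangeEquiv f g hf hg).symm ⟨g h, hmem⟩ : f.range) : K) = f h := by
  have h1 : (MonoidHom.ofInjective hg) h = ⟨g h, hmem⟩ :=
    Subtype.ext (by simp [MonoidHom.ofInjective_apply])
  rw [rangeEquiv, MulEquiv.symm_trans_apply, ← h1, MulEquiv.symm_apply_apply,
    MulEquiv.symm_symm, MonoidHom.ofInjective_apply]

end RangeEquiv

section Tower

open Monoid Monoid.Coprod HNNAux

variable (C : Type) [Group C] (c : ℕ → C)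

noncomputable def AF : Subgroup (G0 C) := (eF C).range
noncomputable def BT : Subgroup (G0 C) := ((thom C c).comp (eF C)).range

theorem eF_injective : Function.Injective (eF C) := inr_injective

theorem thom_eF_injective : Function.Injective ((thom C c).comp (eF C)) :=
  (thom_injective C c).comp (eF_injective C)

noncomputable def phiT : AF C ≃* BT C c :=
  rangeEquiv (eF C) ((thom C c).comp (eF C)) (eF_injective C) (thom_eF_injective C c)

/-- the first HNN extension -/
abbrev Gamma1 := HNNExtension (G0 C) (AF C) (BT C c) (phiT C c)

noncomputable def AS : Subgroup (Gamma1 C c) :=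
  ((of : G0 C →* Gamma1 C c).comp (eF C)).range
noncomputable def BS : Subgroup (Gamma1 C c) :=
  ((of : G0 C →* Gamma1 C c).comp ((shift C).comp (eF C))).range

theorem of_eF_injective : Function.Injective ((of : G0 C →* Gamma1 C c).comp (eF C)) := by
  rw [MonoidHom.coe_comp]
  exact Function.Injective.comp (HNNExtension.of_injective (φ := phiT C c)) (eF_injective C)

theorem of_shift_eF_injective :
    Function.Injective ((of : G0 C →* Gamma1 C c).comp ((shift C).comp (eF C))) := by
  rw [MonoidHom.coe_comp, MonoidHom.coe_comp]
  exact Function.Injective.comp (HNNExtension.of_injective (φ := phiT C c)) (Function.Injective.comp (shift_injective C) (eF_injective C))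

noncomputable def phiS : AS C c ≃* BS C c :=
  rangeEquiv _ _ (of_eF_injective C c) (of_shift_eF_injective C c)

/-- the second HNN extension: our finitely generated group -/
abbrev Gamma := HNNExtension (Gamma1 C c) (AS C c) (BS C c) (phiS C c)

variable {C c} {x : C}

theorem not_conj_AF (hx1 : x ≠ 1) (g : G0 C) : g * inl x * g⁻¹ ∉ AF C := by
  rintro ⟨w, hw⟩
  apply hx1
  have h1 := congrArg (Coprod.fst) hw
  have h2 : Coprod.fst ((eF C) w) = 1 := by
    show Coprod.fst (inr w) = 1
    simp
  rw [h2] at h1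
  simp only [map_mul, map_inv, fst_apply_inl] at h1
  have h3 : Coprod.fst g * x * (Coprod.fst g)⁻¹ = 1 := h1.symm
  rwa [conj_eq_one_iff] at h3

theorem not_conj_BT (hx1 : x ≠ 1) (g : G0 C) : g * inl x * g⁻¹ ∉ BT C c := by
  rintro ⟨w, hw⟩
  have h1 := congrArg (tinv C c) hw
  simp only [map_mul, map_inv] at h1
  rw [tinv_inl] at h1
  have h2 : tinv C c (((thom C c).comp (eF C)) w) = eF C w := by
    show tinv C c (thom C c (eF C w)) = eF C w
    rw [tinv_thom]
  rw [h2] at h1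
  exact not_conj_AF hx1 (tinv C c g) ⟨w, h1⟩

theorem hx_level1 (hx1 : x ≠ 1) (u : ℤˣ) (g : G0 C) :
    g * inl x * g⁻¹ ∉ toSubgroup (AF C) (BT C c) u := by
  rcases Int.units_eq_one_or u with rfl | rfl
  · rw [toSubgroup_one]; exact not_conj_AF hx1 g
  · rw [toSubgroup_neg_one]; exact not_conj_BT hx1 g

theorem hphi_level1 (u : ℤˣ) (a : toSubgroup (AF C) (BT C c) u) (h : G0 C)
    (ha : (a : G0 C) = h * inl x * h⁻¹) :
    ∃ h', ((toSubgroupEquiv (phiT C c) u a : toSubgroup (AF C) (BT C c) (-u)) : G0 C)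
      = h' * inl x * h'⁻¹ := by
  rcases Int.units_eq_one_or u with rfl | rfl
  · obtain ⟨w, hw⟩ := a.2
    refine ⟨thom C c h, ?_⟩
    have ha' : a = ⟨(eF C) w, ⟨w, rfl⟩⟩ := Subtype.ext hw.symm
    rw [toSubgroupEquiv_one, ha']
    have key := rangeEquiv_apply (eF C) ((thom C c).comp (eF C)) (eF_injective C)
      (thom_eF_injective C c) w ⟨w, rfl⟩
    refine Eq.trans key ?_
    show thom C c ((eF C) w) = _
    rw [hw, ha]
    simp only [map_mul, map_inv, thom_inl]
  · obtain ⟨w, hw⟩ := a.2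
    refine ⟨tinv C c h, ?_⟩
    have ha' : a = ⟨((thom C c).comp (eF C)) w, ⟨w, rfl⟩⟩ := Subtype.ext hw.symm
    rw [toSubgroupEquiv_neg_one, ha']
    have key := rangeEquiv_symm_apply (eF C) ((thom C c).comp (eF C)) (eF_injective C)
      (thom_eF_injective C c) w ⟨w, rfl⟩
    refine Eq.trans key ?_
    have h1 : (eF C) w = tinv C c (((thom C c).comp (eF C)) w) := by
      show eF C w = tinv C c (thom C c (eF C w))
      rw [tinv_thom]
    rw [h1, hw, ha]
    simp only [map_mul, map_inv, tinv_inl]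

theorem conj_transfer_level1 (γ : Gamma1 C c) (k : G0 C)
    (h : γ * of (inl x) * γ⁻¹ = of k) :
    ∃ h', k = h' * inl x * h'⁻¹ := by
  obtain ⟨w, hw⟩ := exists_reducedWord (phiT C c) γ
  refine conj_transfer (phiT C c) (inl x) (fun u a h ha => hphi_level1 u a h ha)
    w.toList.length w rfl k ?_
  rw [hw]
  rw [← h]
  group

theorem not_conj_AS (hx1 : x ≠ 1) (γ : Gamma1 C c) :
    γ * of (inl x) * γ⁻¹ ∉ AS C c := by
  rintro ⟨w, hw⟩
  obtain ⟨h', hh'⟩ := conj_transfer_level1 γ ((eF C) w) hw.symm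
  exact not_conj_AF hx1 h' ⟨w, hh'⟩

theorem not_conj_BS (hx1 : x ≠ 1) (γ : Gamma1 C c) :
    γ * of (inl x) * γ⁻¹ ∉ BS C c := by
  rintro ⟨w, hw⟩
  obtain ⟨h', hh'⟩ := conj_transfer_level1 γ ((shift C) ((eF C) w)) hw.symm
  have h2 : (shift C) ((eF C) w)
      = (eF C) ((FreeGroup.lift fun n => FreeGroup.of (n + 1)) w) := shift_inr C w
  rw [h2] at hh'
  exact not_conj_AF hx1 h' ⟨_, hh'⟩

theorem hx_level2 (hx1 : x ≠ 1) (u : ℤˣ) (γ : Gamma1 C c) :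
    γ * of (inl x) * γ⁻¹ ∉ toSubgroup (AS C c) (BS C c) u := by
  rcases Int.units_eq_one_or u with rfl | rfl
  · rw [toSubgroup_one]; exact not_conj_AS hx1 γ
  · rw [toSubgroup_neg_one]; exact not_conj_BS hx1 γ

end Tower

section BaseCent

open Monoid Monoid.Coprod HNNAux

variable (C : Type) [Group C]

abbrev Cn (n : ℕ) := Monoid.Coprod C (FreeGroup (Fin n))

def jn (n : ℕ) : Cn C n →* G0 C :=
  Coprod.lift inl (FreeGroup.lift fun i => inr (FreeGroup.of (i : ℕ)))

def rn (n : ℕ) : G0 C →* Cn C n :=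
  Coprod.lift inl (FreeGroup.lift fun m => if h : m < n then inr (FreeGroup.of ⟨m, h⟩) else 1)

theorem rn_comp_jn (n : ℕ) : (rn C n).comp (jn C n) = MonoidHom.id _ := by
  apply Coprod.hom_ext
  · ext z
    simp [jn, rn]
  · apply FreeGroup.ext_hom
    intro i
    simp [jn, rn, i.2]

theorem jn_injective (n : ℕ) : Function.Injective (jn C n) := by
  have h : ∀ g, rn C n (jn C n g) = g := by
    intro g
    have := congrArg (fun f => (f : Cn C n →* Cn C n) g) (rn_comp_jn C n)
    simpa using this
  exact Function.LeftInverse.injective h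

theorem jn_inl (n : ℕ) (z : C) : jn C n (inl z) = inl z := by simp [jn]

/-- `C ∗ F(Fin 0)` is just `C`. -/
theorem cn_zero_top (y : Cn C 0) : y ∈ (inl : C →* Cn C 0).range := by
  have hF : ∀ w : FreeGroup (Fin 0), w = 1 := fun w => by
    refine FreeGroup.induction_on (C := fun w => w = 1) w rfl (fun i => i.elim0)
      (fun i => i.elim0) ?_
    intro a b ha hb
    rw [ha, hb, mul_one]
  refine Coprod.induction_on y (fun m => ⟨m, rfl⟩) (fun w => ?_) ?_
  · rw [hF w, map_one]
    exact one_mem _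
  · intro a b ha hb
    exact mul_mem ha hb

theorem centralizer_fin {x : C} (hx1 : x ≠ 1) :
    ∀ (n : ℕ) (y : Cn C n), y * inl x = inl x * y → y ∈ (inl : C →* Cn C n).range := by
  intro n
  induction n with
  | zero => intro y _; exact cn_zero_top C y
  | succ n ih =>
    intro y hy
    set φ0 : (⊥ : Subgroup (Cn C n)) ≃* (⊥ : Subgroup (Cn C n)) := MulEquiv.refl _ with hφ0
    set fwd : Cn C (n + 1) →* HNNExtension (Cn C n) ⊥ ⊥ φ0 :=
      Coprod.lift ((of : Cn C n →* _).comp inl)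
        (FreeGroup.lift fun i : Fin (n+1) =>
          if h : (i : ℕ) < n then of (inr (FreeGroup.of ⟨i, h⟩)) else t) with hfwd
    set iota : Cn C n →* Cn C (n + 1) :=
      Coprod.lift inl (FreeGroup.lift fun i : Fin n => inr (FreeGroup.of i.castSucc)) with hiota
    have hcond : ∀ a : (⊥ : Subgroup (Cn C n)),
        (inr (FreeGroup.of (Fin.last n)) : Cn C (n+1)) * iota a
          = iota (φ0 a) * inr (FreeGroup.of (Fin.last n)) := by
      intro a
      have ha : (a : Cn C n) = 1 := Subgroup.mem_bot.mp a.2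
      have ha' : ((φ0 a : (⊥ : Subgroup (Cn C n))) : Cn C n) = 1 :=
        Subgroup.mem_bot.mp (φ0 a).2
      rw [ha, ha']
      simp
    set bwd : HNNExtension (Cn C n) ⊥ ⊥ φ0 →* Cn C (n + 1) :=
      HNNExtension.lift iota (inr (FreeGroup.of (Fin.last n))) hcond with hbwd
    have hbf : bwd.comp fwd = MonoidHom.id _ := by
      apply Coprod.hom_ext
      · ext z
        simp [hfwd, hbwd, hiota]
      · apply FreeGroup.ext_hom
        intro i
        by_cases h : (i : ℕ) < n
        · have h1 : fwd (inr (FreeGroup.of i)) = of (inr (FreeGroup.of ⟨i, h⟩)) := by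
            simp [hfwd, h]
          have h2 : Fin.castSucc (⟨i, h⟩ : Fin n) = i := by
            apply Fin.ext; simp
          simp [h1, hbwd, hiota, h2]
        · have h1 : fwd (inr (FreeGroup.of i)) = t := by
            simp [hfwd, h]
          have h2 : Fin.last n = i := by
            apply Fin.ext
            simp only [Fin.val_last]
            exact Nat.le_antisymm (not_lt.mp h) (Nat.lt_succ_iff.mp i.2)
          simp [h1, hbwd, h2]
    have hfb : fwd.comp bwd = MonoidHom.id _ := by
      apply HNNExtension.hom_ext
      · apply Coprod.hom_ext
        · ext z
          simp [hfwd, hbwd, hiota]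
        · apply FreeGroup.ext_hom
          intro i
          have h : ((Fin.castSucc i : Fin (n+1)) : ℕ) < n := by simp [i.2]
          have h2 : (⟨((Fin.castSucc i : Fin (n+1)) : ℕ), h⟩ : Fin n) = i := by
            apply Fin.ext; simp
          simp [hbwd, hiota, hfwd, h, h2]
      · have h : ¬ ((Fin.last n : Fin (n+1)) : ℕ) < n := by simp
        simp [hbwd, hfwd, h]
    set e := MonoidHom.toMulEquiv fwd bwd hbf hfb with he
    have hex : e (inl x) = of (inl x) := by simp [he, hfwd]
    have hcomm : e y * of (inl x) = of (inl x) * e y := by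
      rw [← hex, ← map_mul, ← map_mul, hy]
    have hx0 : ∀ (u : ℤˣ) (g : Cn C n),
        g * inl x * g⁻¹ ∉ toSubgroup (⊥ : Subgroup (Cn C n)) ⊥ u := by
      intro u g hmem
      have h1 : g * inl x * g⁻¹ = 1 := by
        rcases Int.units_eq_one_or u with rfl | rfl
        · simpa using hmem
        · simpa using hmem
      rw [conj_eq_one_iff] at h1
      exact hx1 (inl_injective (by simpa using h1))
    obtain ⟨z, hz⟩ := mem_range_of_commute φ0 (inl x) hx0 hcomm
    have hzc : z * inl x = inl x * z := by
      apply HNNExtension.of_injective (φ := φ0)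
      rw [map_mul, map_mul, hz, hcomm]
    obtain ⟨c0, hc0⟩ := ih z hzc
    refine ⟨c0, ?_⟩
    have h3 : y = e.symm (of z) := by
      rw [hz]
      exact (MulEquiv.symm_apply_apply e y).symm
    have h4 : e.symm (of z) = iota z := by
      show bwd (of z) = iota z
      simp [hbwd]
    rw [h3, h4, ← hc0]
    simp [hiota]

theorem mem_iSup_jn (y : G0 C) : ∃ n, y ∈ (jn C n).range := by
  have hdir : Directed (· ≤ ·) (fun n => (jn C n).range) := by
    have hmono : ∀ {n m : ℕ}, n ≤ m → (jn C n).range ≤ (jn C m).range := by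
      intro n m hnm
      have hcomp : (jn C m).comp
          (Coprod.lift inl (FreeGroup.lift fun i : Fin n =>
            inr (FreeGroup.of (Fin.castLE hnm i)))) = jn C n := by
        apply Coprod.hom_ext
        · ext z
          simp [jn]
        · apply FreeGroup.ext_hom
          intro i
          simp [jn]
      rintro _ ⟨z, rfl⟩
      exact ⟨_, congrArg (fun f => (f : Cn C n →* G0 C) z) hcomp⟩
    exact fun n m => ⟨max n m, hmono (le_max_left n m), hmono (le_max_right n m)⟩
  rw [← Subgroup.mem_iSup_of_directed hdir]
  clear hdir
  refine Coprod.induction_on y (fun z => ?_) (fun w => ?_) ?_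
  · exact le_iSup (fun n => (jn C n).range) 0 ⟨inl z, jn_inl C 0 z⟩
  · refine FreeGroup.induction_on (C := fun w => inr w ∈ ⨆ n, (jn C n).range) w ?_ ?_ ?_ ?_
    · simp only [map_one]
      exact one_mem _
    · intro m
      refine le_iSup (fun n => (jn C n).range) (m + 1) ⟨inr (FreeGroup.of ⟨m, Nat.lt_succ_self m⟩), ?_⟩
      show jn C (m+1) (inr (FreeGroup.of ⟨m, Nat.lt_succ_self m⟩)) = inr (FreeGroup.of m)
      simp [jn]
    · intro m hm
      simp only [map_inv]
      exact inv_mem hm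
    · intro a b ha hb
      simp only [map_mul]
      exact mul_mem ha hb
  · intro a b ha hb
    exact mul_mem ha hb

theorem centralizer_G0 {x : C} (hx1 : x ≠ 1) (y : G0 C)
    (hy : y * inl x = inl x * y) : y ∈ (inl : C →* G0 C).range := by
  obtain ⟨n, z, hz⟩ := mem_iSup_jn C y
  have hzc : z * inl x = inl x * z := by
    apply jn_injective C n
    rw [map_mul, map_mul, jn_inl, hz, hy]
  obtain ⟨c0, hc0⟩ := centralizer_fin C hx1 n z hzc
  refine ⟨c0, ?_⟩
  rw [← hz, ← hc0, jn_inl]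

end BaseCent

section Assembly

open Monoid Monoid.Coprod HNNAux

variable {C : Type} [Group C] {c : ℕ → C}

/-- the embedding of `C` into `Γ` -/
noncomputable def Phi (C : Type) [Group C] (c : ℕ → C) : C →* Gamma C c :=
  (of : Gamma1 C c →* Gamma C c).comp ((of : G0 C →* Gamma1 C c).comp inl)

theorem Phi_injective : Function.Injective (Phi C c) := by
  unfold Phi
  rw [MonoidHom.coe_comp, MonoidHom.coe_comp]
  exact Function.Injective.comp (HNNExtension.of_injective (φ := phiS C c))
    (Function.Injective.comp (HNNExtension.of_injective (φ := phiT C c)) inl_injective)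

theorem centralizer_eq {x : C} (hx1 : x ≠ 1) (hxc : x ∈ Subgroup.center C) :
    Subgroup.centralizer {Phi C c x} = (Phi C c).range := by
  apply le_antisymm
  · intro y hy
    have hcomm : y * Phi C c x = Phi C c x * y :=
      (Subgroup.mem_centralizer_iff.mp hy (Phi C c x) rfl).symm
    obtain ⟨y₁, hy₁⟩ := mem_range_of_commute (phiS C c) (of (inl x))
      (fun u g => hx_level2 hx1 u g) hcomm
    have hcomm1 : y₁ * of (inl x) = of (inl x) * y₁ := by
      apply HNNExtension.of_injective (φ := phiS C c)
      rw [map_mul, map_mul, hy₁]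
      exact hcomm
    obtain ⟨y₀, hy₀⟩ := mem_range_of_commute (phiT C c) (inl x)
      (fun u g => hx_level1 hx1 u g) hcomm1
    have hcomm0 : y₀ * inl x = inl x * y₀ := by
      apply HNNExtension.of_injective (φ := phiT C c)
      rw [map_mul, map_mul, hy₀]
      exact hcomm1
    obtain ⟨z, hz⟩ := centralizer_G0 C hx1 y₀ hcomm0
    refine ⟨z, ?_⟩
    rw [← hy₁, ← hy₀, ← hz]
    rfl
  · rintro _ ⟨z, rfl⟩
    rw [Subgroup.mem_centralizer_iff]
    rintro _ rfl
    rw [← map_mul, ← map_mul]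
    congr 1
    exact (Subgroup.mem_center_iff.mp hxc z).symm

theorem phiS_coe (w : FreeGroup ℕ) :
    ((phiS C c ⟨of ((eF C) w), ⟨w, rfl⟩⟩ : BS C c) : Gamma1 C c)
      = of ((shift C) ((eF C) w)) :=
  rangeEquiv_apply _ _ (of_eF_injective C c) (of_shift_eF_injective C c) w ⟨w, rfl⟩

theorem phiT_coe (w : FreeGroup ℕ) :
    ((phiT C c ⟨(eF C) w, ⟨w, rfl⟩⟩ : BT C c) : G0 C) = thom C c ((eF C) w) :=
  rangeEquiv_apply _ _ (eF_injective C) (thom_eF_injective C c) w ⟨w, rfl⟩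

theorem gamma_fg (hc : Function.Surjective c) : Group.FG (Gamma C c) := by
  set a : Gamma C c := of (of (inr (FreeGroup.of 0))) with ha
  set b : Gamma C c := of (HNNExtension.t : Gamma1 C c) with hb
  set S := Subgroup.closure {a, b, (HNNExtension.t : Gamma C c)} with hS
  have hmem_a : a ∈ S := Subgroup.subset_closure (by simp)
  have hmem_b : b ∈ S := Subgroup.subset_closure (by simp)
  have hmem_t : (HNNExtension.t : Gamma C c) ∈ S := Subgroup.subset_closure (by simp)
  -- step 1 : all sn := of (of (inr (FreeGroup.of n))) are in S
  have hsn : ∀ n : ℕ, (of (of (inr (FreeGroup.of n))) : Gamma C c) ∈ S := by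
    intro n
    induction n with
    | zero => exact hmem_a
    | succ n ihn =>
      have key := HNNExtension.equiv_eq_conj (φ := phiS C c)
        ⟨of ((eF C) (FreeGroup.of n)), ⟨FreeGroup.of n, rfl⟩⟩
      rw [phiS_coe] at key
      have h1 : (shift C) ((eF C) (FreeGroup.of n)) = inr (FreeGroup.of (n+1)) := by
        show (shift C) (inr (FreeGroup.of n)) = _
        simp [shift]
      rw [h1] at key
      show (of (of (inr (FreeGroup.of (n+1)))) : Gamma C c) ∈ S
      rw [key]
      exact mul_mem (mul_mem hmem_t ihn) (inv_mem hmem_t)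
  -- step 2 : all of (of (inl (c n))) are in S
  have hcn : ∀ n : ℕ, (of (of (inl (c n))) : Gamma C c) ∈ S := by
    intro n
    have key := HNNExtension.equiv_eq_conj (φ := phiT C c)
      ⟨(eF C) (FreeGroup.of n), ⟨FreeGroup.of n, rfl⟩⟩
    rw [phiT_coe] at key
    have h1 : thom C c ((eF C) (FreeGroup.of n))
        = inl (c n) * inr (FreeGroup.of n) := by
      show thom C c (inr (FreeGroup.of n)) = _
      simp [thom]
    rw [h1] at key
    -- key : of (inl (c n) * inr (of n)) = t₁ * of (inr (of n)) * t₁⁻¹  in Gamma1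
    have key2 := congrArg (of : Gamma1 C c →* Gamma C c) key
    simp only [map_mul, map_inv] at key2
    have heF : (eF C) (FreeGroup.of n) = inr (FreeGroup.of n) := rfl
    rw [heF] at key2
    have h2 : (of (of (inl (c n))) : Gamma C c)
        = b * of (of (inr (FreeGroup.of n))) * b⁻¹ * (of (of (inr (FreeGroup.of n))))⁻¹ := by
      rw [hb, ← key2]
      group
    rw [h2]
    exact mul_mem (mul_mem (mul_mem hmem_b (hsn n)) (inv_mem hmem_b)) (inv_mem (hsn n))
  have hz : ∀ z : C, (of (of (inl z)) : Gamma C c) ∈ S := by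
    intro z
    obtain ⟨n, rfl⟩ := hc z
    exact hcn n
  have hg0 : ∀ g : G0 C, (of (of g) : Gamma C c) ∈ S := by
    intro g
    refine Coprod.induction_on g hz (fun w => ?_) (fun p q hp hq => ?_)
    · refine FreeGroup.induction_on
        (C := fun w => (of (of (inr w)) : Gamma C c) ∈ S) w ?_ hsn ?_ ?_
      · simp only [map_one]; exact one_mem _
      · intro m hm
        simp only [map_inv]
        exact inv_mem hm
      · intro p q hp hq
        simp only [map_mul]
        exact mul_mem hp hq
    · simp only [map_mul]
      exact mul_mem hp hq
  have hg1 : ∀ γ : Gamma1 C c, (of γ : Gamma C c) ∈ S := by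
    intro γ
    refine HNNExtension.induction_on γ hg0 hmem_b (fun p q hp hq => ?_) (fun p hp => ?_)
    · rw [map_mul]; exact mul_mem hp hq
    · rw [map_inv]; exact inv_mem hp
  have htop : S = ⊤ := by
    rw [eq_top_iff]
    intro γ _
    refine HNNExtension.induction_on γ hg1 hmem_t (fun p q hp hq => mul_mem hp hq)
      (fun p hp => inv_mem hp)
  rw [Group.fg_iff]
  exact ⟨{a, b, (HNNExtension.t : Gamma C c)}, htop, Set.toFinite _⟩

end Assembly

end HNNAux

open HNNAux in
/-- Every countable torsion-free group `C` with a nontrivial central element `x`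
embeds into a finitely generated group `Γ` in such a way that the centralizer
of the image of `x` in `Γ` is exactly the image of `C`. -/
theorem exists_fg_embedding_centralizer_eq_range (C : Type) [Group C] [Countable C]
    (hC : Monoid.IsTorsionFree C) (x : C) (hx : x ∈ Subgroup.center C) (hx1 : x ≠ 1) :
    ∃ (Γ : Type) (_ : Group Γ), Group.FG Γ ∧
      ∃ φ : C →* Γ, Function.Injective φ ∧
        Subgroup.centralizer {φ x} = φ.range := by
  obtain ⟨c, hc⟩ := exists_surjective_nat C
  exact ⟨Gamma C c, inferInstance, gamma_fg hc, Phi C c, Phi_injective,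
    centralizer_eq hx1 hx⟩
end
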